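/- Let α ∈ (0,2] and let λ, μ, ν be complex numbers with λ ≠ 0 and ν ≠ 0. Set c_α = 2^{2 − max(1−2α,0) − 2·max(α−1,0)} · α^{α−1} · B(min(α,1), min(α,1)) (where B is the Beta function) and τ_* = 2^{1/α − max(1/α−2,0)} · α / (|μ| + √(|μ|² + c_α·|λ|·|ν|/Γ(α)))^{1/α}. Then τ_* > 0 and the convergence radius satisfies R(λ,μ,ν) ≥ τ_*; in particular Σ_{k≥1} |a_k| t^{αk} < ∞ for every t ∈ [0, τ_*). -/

import Mathlib

open MeasureTheory Finset

/-- The Euler Beta function `B(a,b) = ∫₀¹ u^(a-1) (1-u)^(b-1) du`. -/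
noncomputable def Beta (a b : ℝ) : ℝ :=
  ∫ u in Set.Ioo (0:ℝ) 1, u ^ (a - 1) * (1 - u) ^ (b - 1)

/-- The sequence `(a_k)` solving `(A_{λ,μ,ν})`:
`a 0 = 0`, `a 1 = ν/Γ(α+1)`, and
`a (k+1) = (λ a*²_k + μ a_k) Γ(αk+1)/Γ(αk+α+1)` for `k ≥ 1`,
where `a*²_k = ∑_{j=1}^{k-1} a_j a_{k-j}`. -/
def IsRiccatiSeq (α : ℝ) (l m n : ℂ) (a : ℕ → ℂ) : Prop :=
  a 0 = 0 ∧ a 1 = n / (Real.Gamma (α + 1) : ℂ) ∧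
  ∀ k : ℕ, 1 ≤ k →
    a (k + 1) = (l * (∑ j ∈ Finset.Ico 1 k, a j * a (k - j)) + m * a k) *
      ((Real.Gamma (α * (k:ℝ) + 1) / Real.Gamma (α * (k:ℝ) + α + 1) : ℝ) : ℂ)

/-- Convergence radius of the fractional power series `∑_{k≥1} a_k t^(αk)`:
`R = sup { t ≥ 0 : ∑_{k≥1} |a_k| t^(αk) < ∞ }`. -/
noncomputable def radius (α : ℝ) (a : ℕ → ℂ) : ENNReal :=
  ⨆ (t : NNReal) (_ : Summable fun k : ℕ => ‖a k‖ * (t : ℝ) ^ (α * (k : ℝ))), (t : ENNReal)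

section Helpers
open Real Set

section BetaFacts
variable {β : ℝ} (hb0 : 0 < β) (hb1 : β ≤ 1)

lemma beta_fun_contOn : ContinuousOn (fun u : ℝ => u ^ (β - 1) * (1 - u) ^ (β - 1)) (Ioo 0 1) := by
  apply ContinuousOn.mul
  · exact (continuousOn_id).rpow_const fun x hx => Or.inl (ne_of_gt hx.1)
  · exact (continuousOn_const.sub continuousOn_id).rpow_const
      fun x hx => Or.inl (sub_ne_zero.mpr (ne_of_gt hx.2))

lemma half_pow_eq : ((1:ℝ)/2) ^ (β - 1) = (2:ℝ) ^ (1 - β) := by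
  rw [show (1:ℝ)/2 = 2⁻¹ by norm_num, ← Real.rpow_neg_one (2:ℝ),
    ← Real.rpow_mul (by norm_num)]
  norm_num

include hb0 hb1 in
lemma beta_integrable :
    IntegrableOn (fun u : ℝ => u ^ (β - 1) * (1 - u) ^ (β - 1)) (Ioo (0:ℝ) 1) := by
  have hb1' : β - 1 ≤ 0 := by linarith
  have hmeas : AEStronglyMeasurable (fun u : ℝ => u ^ (β - 1) * (1 - u) ^ (β - 1))
      (volume.restrict (Ioo (0:ℝ) 1)) :=
    (beta_fun_contOn).aestronglyMeasurable measurableSet_Ioo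
  have hsub1 : Ioo (0:ℝ) (1/2) ⊆ Ioo 0 1 := Set.Ioo_subset_Ioo le_rfl (by norm_num)
  have hsub2 : Ioo (1/2:ℝ) 1 ⊆ Ioo 0 1 := Set.Ioo_subset_Ioo (by norm_num) le_rfl
  have h2 : IntegrableOn (fun u : ℝ => u ^ (β - 1) * (1 - u) ^ (β - 1)) (Ioo (0:ℝ) (1/2)) := by
    have hint : IntegrableOn (fun u : ℝ => u ^ (β - 1) * (2:ℝ) ^ (1 - β)) (Ioo (0:ℝ) (1/2)) := by
      have := (intervalIntegral.intervalIntegrable_rpow' (by linarith : (-1:ℝ) < β - 1)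
        (a := 0) (b := 1/2))
      rw [intervalIntegrable_iff_integrableOn_Ioo_of_le (by norm_num)] at this
      exact this.mul_const _
    refine Integrable.mono' hint (hmeas.mono_measure (Measure.restrict_mono hsub1 le_rfl)) ?_
    filter_upwards [ae_restrict_mem measurableSet_Ioo] with u hu
    rw [norm_mul, norm_of_nonneg (rpow_nonneg hu.1.le _),
      norm_of_nonneg (rpow_nonneg (by linarith [hu.2] : (0:ℝ) ≤ 1 - u) _)]
    refine mul_le_mul_of_nonneg_left ?_ (rpow_nonneg hu.1.le _)
    calc (1 - u) ^ (β - 1) ≤ ((1:ℝ)/2) ^ (β - 1) :=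
          Real.rpow_le_rpow_of_nonpos (by norm_num) (by linarith [hu.2]) hb1'
      _ = (2:ℝ) ^ (1 - β) := half_pow_eq
  have h3 : IntegrableOn (fun u : ℝ => u ^ (β - 1) * (1 - u) ^ (β - 1)) (Ioo (1/2:ℝ) 1) := by
    have hint : IntegrableOn (fun u : ℝ => (2:ℝ) ^ (1 - β) * (1 - u) ^ (β - 1))
        (Ioo (1/2:ℝ) 1) := by
      have h0 := (intervalIntegral.intervalIntegrable_rpow' (by linarith : (-1:ℝ) < β - 1)
        (a := 0) (b := 1/2))
      have := (h0.comp_sub_left 1).symm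
      norm_num at this
      rw [intervalIntegrable_iff_integrableOn_Ioo_of_le (by norm_num)] at this
      exact this.const_mul _
    refine Integrable.mono' hint (hmeas.mono_measure (Measure.restrict_mono hsub2 le_rfl)) ?_
    filter_upwards [ae_restrict_mem measurableSet_Ioo] with u hu
    rw [norm_mul, norm_of_nonneg (rpow_nonneg (by linarith [hu.1] : (0:ℝ) ≤ u) _),
      norm_of_nonneg (rpow_nonneg (by linarith [hu.2] : (0:ℝ) ≤ 1 - u) _)]
    refine mul_le_mul_of_nonneg_right ?_ (rpow_nonneg (by linarith [hu.2]) _)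
    calc u ^ (β - 1) ≤ ((1:ℝ)/2) ^ (β - 1) :=
          Real.rpow_le_rpow_of_nonpos (by norm_num) (by linarith [hu.1]) hb1'
      _ = (2:ℝ) ^ (1 - β) := half_pow_eq
  have : IntegrableOn (fun u : ℝ => u ^ (β - 1) * (1 - u) ^ (β - 1))
      (Ioo (0:ℝ) (1/2) ∪ Ico (1/2:ℝ) 1) := by
    refine IntegrableOn.union h2 ?_
    rw [integrableOn_Ico_iff_integrableOn_Ioo]
    exact h3
  refine this.mono_set fun x hx => ?_
  rcases lt_or_ge x (1/2 : ℝ) with h | h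
  · exact Or.inl ⟨hx.1, h⟩
  · exact Or.inr ⟨h, hx.2⟩
end BetaFacts

section BetaFacts2
variable {β : ℝ} (hb0 : 0 < β) (hb1 : β ≤ 1)

include hb0 hb1 in
lemma beta_pos : 0 < Beta β β := by
  rw [Beta]
  rw [setIntegral_pos_iff_support_of_nonneg_ae ?_ (beta_integrable hb0 hb1)]
  · refine lt_of_lt_of_le ?_ (measure_mono ?_ : volume (Ioo (0:ℝ) 1) ≤ _)
    · simp [Real.volume_Ioo]
    · intro x hx
      refine ⟨?_, hx⟩
      simp only [Function.mem_support]
      have h1 : (0:ℝ) < x := hx.1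
      have h2 : (0:ℝ) < 1 - x := by linarith [hx.2]
      positivity
  · filter_upwards [ae_restrict_mem measurableSet_Ioo] with u hu
    have h1 : (0:ℝ) < u := hu.1
    have h2 : (0:ℝ) < 1 - u := by linarith [hu.2]
    positivity

lemma beta_one_one : Beta 1 1 = 1 := by
  rw [Beta]
  norm_num [Real.volume_Ioo]
end BetaFacts2


lemma two_c_le {a b c : ℝ} (ha : 0 ≤ a) (hb : 0 ≤ b) (hc : 0 ≤ c) (h : c^2 ≤ a*b) :
    2*c ≤ a + b := by nlinarith [sq_nonneg (a-b), sq_nonneg (a+b)]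

lemma sq_rpow_eq {x : ℝ} (hx : 0 ≤ x) (p : ℝ) : (x^2) ^ p = x ^ p * x ^ p := by
  have h2 : x ^ p * x ^ p = (x ^ p) ^ (2:ℕ) := (sq _).symm
  rw [h2, ← Real.rpow_natCast (x ^ p) 2, ← Real.rpow_mul hx, ← Real.rpow_natCast x 2,
    ← Real.rpow_mul hx]
  ring_nf

lemma midpoint_le {β : ℝ} (hb1' : β - 1 ≤ 0) {m h : ℝ} (hh : 0 < h) (h0 : h < m) (h1 : m + h < 1) :
    ∀ u ∈ Set.Icc (m - h) (m + h),
      2 * (m ^ (β-1) * (1-m) ^ (β-1)) ≤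
        u ^ (β-1) * (1-u) ^ (β-1) + (2*m-u) ^ (β-1) * (1-(2*m-u)) ^ (β-1) := by
  intro u hu
  obtain ⟨hu1, hu2⟩ := hu
  have hu0 : 0 < u := by linarith
  have hv0 : 0 < 2*m - u := by linarith
  have h1u : 0 < 1 - u := by linarith
  have h1v : 0 < 1 - (2*m - u) := by linarith
  have hm0 : 0 < m := by linarith
  have h1m : 0 < 1 - m := by linarith
  refine two_c_le (by positivity) (by positivity) (by positivity) ?_
  have key1 : (m^2) ^ (β-1) ≤ (u * (2*m - u)) ^ (β-1) := by
    refine Real.rpow_le_rpow_of_nonpos (by positivity) (by nlinarith [sq_nonneg (u - m)]) hb1'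
  have key2 : ((1-m)^2) ^ (β-1) ≤ ((1-u) * (1-(2*m-u))) ^ (β-1) := by
    refine Real.rpow_le_rpow_of_nonpos (by positivity) (by nlinarith [sq_nonneg (u - m)]) hb1'
  calc (m ^ (β-1) * (1-m) ^ (β-1))^2
      = (m^2) ^ (β-1) * ((1-m)^2) ^ (β-1) := by
        rw [sq_rpow_eq hm0.le, sq_rpow_eq h1m.le]; ring
    _ ≤ (u * (2*m - u)) ^ (β-1) * ((1-u) * (1-(2*m-u))) ^ (β-1) := by
        refine mul_le_mul key1 key2 (Real.rpow_nonneg (by positivity) _) (Real.rpow_nonneg (by positivity) _)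
    _ = u ^ (β-1) * (1-u) ^ (β-1) * ((2*m-u) ^ (β-1) * (1-(2*m-u)) ^ (β-1)) := by
        rw [Real.mul_rpow hu0.le hv0.le, Real.mul_rpow h1u.le h1v.le]; ring

lemma midpoint_integral {β : ℝ} (hb1' : β - 1 ≤ 0) {m h : ℝ} (hh : 0 < h) (h0 : h < m)
    (h1 : m + h < 1) :
    m ^ (β-1) * (1-m) ^ (β-1) * (2*h) ≤
      ∫ u in (m-h)..(m+h), u ^ (β-1) * (1-u) ^ (β-1) := by
  set g : ℝ → ℝ := fun u => u ^ (β-1) * (1-u) ^ (β-1) with hg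
  have hsub : Set.Icc (m-h) (m+h) ⊆ Set.Ioo (0:ℝ) 1 := by
    intro x hx; exact ⟨by linarith [hx.1], by linarith [hx.2]⟩
  have hcont : ContinuousOn g (Set.Icc (m-h) (m+h)) := beta_fun_contOn.mono hsub
  have hab : m - h ≤ m + h := by linarith
  have hint : IntervalIntegrable g volume (m-h) (m+h) := by
    apply ContinuousOn.intervalIntegrable
    rwa [Set.uIcc_of_le hab]
  have hint2 : IntervalIntegrable (fun u => g (2*m - u)) volume (m-h) (m+h) := by
    have := (hint.comp_sub_left (2*m))
    have e1 : 2*m - (m-h) = m+h := by ring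
    have e2 : 2*m - (m+h) = m-h := by ring
    rw [e1, e2] at this
    exact this.symm
  have hrefl : (∫ u in (m-h)..(m+h), g (2*m - u)) = ∫ u in (m-h)..(m+h), g u := by
    rw [intervalIntegral.integral_comp_sub_left g (2*m)]
    congr 1 <;> ring
  have hmono : (∫ _ in (m-h)..(m+h), (2 * g m)) ≤
      ∫ u in (m-h)..(m+h), (g u + g (2*m - u)) := by
    refine intervalIntegral.integral_mono_on hab intervalIntegrable_const (hint.add hint2) ?_
    intro u hu
    exact midpoint_le hb1' hh h0 h1 u hu
  rw [intervalIntegral.integral_const, intervalIntegral.integral_add hint hint2, hrefl] at hmono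
  have : (m + h - (m - h)) • (2 * g m) = 2 * h * (2 * g m) := by
    rw [smul_eq_mul]; ring_nf
  rw [this] at hmono
  have : g m * (2*h) ≤ ∫ u in (m-h)..(m+h), g u := by linarith
  simpa [hg] using this

lemma conv_le_beta {β : ℝ} (hb0 : 0 < β) (hb1 : β ≤ 1) (k : ℕ) (hk : 1 ≤ k) :
    ∑ i ∈ Finset.Ico 1 k, (i:ℝ) ^ (β-1) * ((k:ℝ) - (i:ℝ)) ^ (β-1) ≤
      Beta β β * (k:ℝ) ^ (2*β-1) := by
  set g : ℝ → ℝ := fun u => u ^ (β-1) * (1-u) ^ (β-1) with hg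
  have hb1' : β - 1 ≤ 0 := by linarith
  set K : ℝ := (k:ℝ) with hK
  have hK1 : 1 ≤ K := by rw [hK]; exact_mod_cast hk
  have hK0 : 0 < K := by linarith
  set A : ℕ → ℝ := fun n => 1/(2*K) + n/K with hA
  have hcast : ((k-1 : ℕ):ℝ) = K - 1 := by
    rw [hK, Nat.cast_sub hk]; norm_num
  -- midpoint estimate per cell
  have key : ∀ i ∈ Finset.range (k-1),
      g (((i+1 : ℕ):ℝ) / K) * (1/K) ≤ ∫ u in (A i)..(A (i+1)), g u := by
    intro i hi
    have hik : (i:ℝ) + 2 ≤ K := by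
      have : i + 2 ≤ k := by have := Finset.mem_range.mp hi; omega
      rw [hK]; exact_mod_cast this
    set m : ℝ := ((i+1 : ℕ):ℝ) / K with hm
    have hmv : m = ((i:ℝ)+1)/K := by rw [hm]; push_cast; ring
    have hmid := midpoint_integral (β := β) hb1' (h := 1/(2*K)) (m := m)
      (by positivity) ?_ ?_
    · have e1 : m - 1/(2*K) = A i := by rw [hmv]; simp only [hA]; field_simp; ring
      have e2 : m + 1/(2*K) = A (i+1) := by
        rw [hmv]; simp only [hA]; push_cast; field_simp; ring
      have e3 : (2 * (1/(2*K))) = 1/K := by field_simp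
      rw [e1, e2, e3] at hmid
      exact hmid
    · rw [hmv, div_lt_div_iff₀ (by positivity) hK0]
      nlinarith
    · rw [hmv]
      rw [div_add_div _ _ (ne_of_gt hK0) (by positivity), div_lt_one (by positivity)]
      nlinarith
  -- integrability on cells
  have hints : ∀ i, i < k - 1 → IntervalIntegrable g volume (A i) (A (i+1)) := by
    intro i hi
    have hik : (i:ℝ) + 2 ≤ K := by
      have : i + 2 ≤ k := by omega
      rw [hK]; exact_mod_cast this
    have hAle : A i ≤ A (i+1) := by
      simp only [hA]; push_cast
      have h1 : (i:ℝ)/K ≤ ((i:ℝ)+1)/K := by gcongr <;> linarith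
      linarith
    have hsub : Set.uIcc (A i) (A (i+1)) ⊆ Set.Ioo (0:ℝ) 1 := by
      rw [Set.uIcc_of_le hAle]
      intro x hx
      constructor
      · have : 0 < A i := by simp only [hA]; positivity
        linarith [hx.1]
      · have : A (i+1) < 1 := by
          simp only [hA]; push_cast
          rw [div_add_div _ _ (by positivity) (ne_of_gt hK0), div_lt_one (by positivity)]
          nlinarith
        linarith [hx.2]
    exact (beta_fun_contOn.mono hsub).intervalIntegrable
  have hadj := intervalIntegral.sum_integral_adjacent_intervals (a := A) (n := k-1)
    (fun i hi => hints i hi)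
  -- whole integral at most Beta
  have hfinal : (∫ u in (A 0)..(A (k-1)), g u) ≤ Beta β β := by
    have hle : A 0 ≤ A (k-1) := by
      simp only [hA, hcast, Nat.cast_zero, zero_div]
      have h1 : (0:ℝ) ≤ (K-1)/K := div_nonneg (by linarith) hK0.le
      linarith
    rw [intervalIntegral.integral_of_le hle, Beta]
    have hnn : 0 ≤ᵐ[volume.restrict (Set.Ioo (0:ℝ) 1)] g := by
      filter_upwards [ae_restrict_mem measurableSet_Ioo] with u hu
      have h1 : (0:ℝ) < u := hu.1
      have h2 : (0:ℝ) < 1 - u := by linarith [hu.2]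
      positivity
    refine setIntegral_mono_set (beta_integrable hb0 hb1) hnn (HasSubset.Subset.eventuallyLE ?_)
    intro x hx
    constructor
    · have : 0 < A 0 := by simp only [hA]; positivity
      linarith [hx.1]
    · have : A (k-1) < 1 := by
        simp only [hA, hcast]
        rw [div_add_div _ _ (by positivity) (ne_of_gt hK0), div_lt_one (by positivity)]
        nlinarith
      linarith [hx.2]
  have hsum : ∑ i ∈ Finset.range (k-1), g (((i+1 : ℕ):ℝ)/K) * (1/K) ≤ Beta β β :=
    le_trans (Finset.sum_le_sum key) (le_of_eq hadj |>.trans hfinal)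
  -- termwise identity
  have hterm : ∀ J : ℝ, 1 ≤ J → J ≤ K - 1 →
      J ^ (β-1) * (K-J) ^ (β-1) = g (J/K) * (1/K) * K ^ (2*β-1) := by
    intro J h1 h2
    have hJ0 : 0 < J := by linarith
    have hKJ : 0 < K - J := by linarith
    have hq : (1 : ℝ) - J/K = (K-J)/K := by field_simp
    simp only [hg]
    rw [hq, Real.div_rpow hJ0.le hK0.le, Real.div_rpow hKJ.le hK0.le,
      show (2*β-1) = (β-1) + ((β-1) + 1) by ring, Real.rpow_add hK0, Real.rpow_add hK0,
      Real.rpow_one]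
    have hKb : K ^ (β-1) ≠ 0 := ne_of_gt (Real.rpow_pos_of_pos hK0 _)
    field_simp
  have hre : ∑ i ∈ Finset.Ico 1 k, (i:ℝ) ^ (β-1) * (K - (i:ℝ)) ^ (β-1) =
      ∑ i ∈ Finset.range (k-1), ((1+i : ℕ):ℝ) ^ (β-1) * (K - ((1+i : ℕ):ℝ)) ^ (β-1) :=
    Finset.sum_Ico_eq_sum_range _ _ _
  rw [hre]
  calc ∑ i ∈ Finset.range (k-1), ((1+i : ℕ):ℝ) ^ (β-1) * (K - ((1+i : ℕ):ℝ)) ^ (β-1)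
      = ∑ i ∈ Finset.range (k-1), g (((i+1 : ℕ):ℝ)/K) * (1/K) * K ^ (2*β-1) := by
        refine Finset.sum_congr rfl fun i hi => ?_
        have h1i : (1:ℝ) ≤ ((1+i : ℕ):ℝ) := by exact_mod_cast Nat.le_add_right 1 i
        have h2i : ((1+i : ℕ):ℝ) ≤ K - 1 := by
          rw [← hcast]
          have : 1 + i ≤ k - 1 := by have := Finset.mem_range.mp hi; omega
          exact_mod_cast this
        have := hterm ((1+i : ℕ):ℝ) h1i h2i
        rw [this, show 1 + i = i + 1 by omega]
    _ = (∑ i ∈ Finset.range (k-1), g (((i+1 : ℕ):ℝ)/K) * (1/K)) * K ^ (2*β-1) :=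
        (Finset.sum_mul _ _ _).symm
    _ ≤ Beta β β * K ^ (2*β-1) :=
        mul_le_mul_of_nonneg_right hsum (Real.rpow_nonneg hK0.le _)

lemma gamma_interp {s x : ℝ} (hs0 : 0 ≤ s) (hs1 : s ≤ 1) (hx : 0 < x) :
    Real.Gamma (x + 1) * (x + s) ^ s ≤ Real.Gamma (x + 1 + s) := by
  have hxs : 0 < x + s := by linarith
  have h1 : 0 < x + 1 + s := by linarith
  have hG1 : 0 < Real.Gamma (x + s) := Real.Gamma_pos_of_pos hxs
  have hG2 : 0 < Real.Gamma (x + 1 + s) := Real.Gamma_pos_of_pos h1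
  have hcx : Real.log (Real.Gamma (x + 1)) ≤
      s * Real.log (Real.Gamma (x + s)) + (1 - s) * Real.log (Real.Gamma (x + 1 + s)) := by
    have := Real.convexOn_log_Gamma.2 (mem_Ioi.mpr hxs) (mem_Ioi.mpr h1) hs0
      (by linarith : (0:ℝ) ≤ 1 - s) (by ring)
    simpa [Function.comp, smul_eq_mul, show s * (x + s) + (1 - s) * (x + 1 + s) = x + 1 by ring]
      using this
  have key : Real.Gamma (x + 1) ≤ Real.Gamma (x + s) ^ s * Real.Gamma (x + 1 + s) ^ (1 - s) := by
    have h := Real.exp_le_exp.mpr hcx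
    rw [Real.exp_log (Real.Gamma_pos_of_pos (by linarith : (0:ℝ) < x + 1))] at h
    rw [Real.exp_add, ← Real.log_rpow hG1, ← Real.log_rpow hG2, Real.exp_log (rpow_pos_of_pos hG1 _),
      Real.exp_log (rpow_pos_of_pos hG2 _)] at h
    exact h
  have hrec : Real.Gamma (x + s) * (x + s) = Real.Gamma (x + 1 + s) := by
    have := Real.Gamma_add_one hxs.ne'
    rw [show x + s + 1 = x + 1 + s by ring] at this
    rw [this]; ring
  calc Real.Gamma (x + 1) * (x + s) ^ s
      ≤ (Real.Gamma (x + s) ^ s * Real.Gamma (x + 1 + s) ^ (1 - s)) * (x + s) ^ s := by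
        have := rpow_nonneg hxs.le s
        gcongr
    _ = (Real.Gamma (x + s) * (x + s)) ^ s * Real.Gamma (x + 1 + s) ^ (1 - s) := by
        rw [Real.mul_rpow hG1.le hxs.le]; ring
    _ = Real.Gamma (x + 1 + s) := by
        rw [hrec, ← Real.rpow_add hG2]; norm_num

lemma G_le_low {α : ℝ} (hα : 0 < α) (hα1 : α ≤ 1) (x : ℝ) (hx : 0 < x) :
    Real.Gamma (x+1) / Real.Gamma (x+α+1) ≤ (x+α) ^ (-α) := by
  have h2 : 0 < Real.Gamma (x+α+1) := Real.Gamma_pos_of_pos (by linarith)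
  rw [div_le_iff₀ h2]
  have := gamma_interp hα.le hα1 hx
  rw [show x+1+α = x+α+1 by ring] at this
  calc Real.Gamma (x+1) = Real.Gamma (x+1) * ((x+α)^α * (x+α)^(-α)) := by
        rw [← Real.rpow_add (by linarith), add_neg_cancel, Real.rpow_zero, mul_one]
    _ = (Real.Gamma (x+1) * (x+α)^α) * (x+α)^(-α) := by ring
    _ ≤ Real.Gamma (x+α+1) * (x+α)^(-α) := by
        have h3 : (0:ℝ) ≤ (x+α)^(-α) := Real.rpow_nonneg (by linarith) _
        exact mul_le_mul_of_nonneg_right this h3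
    _ = (x+α) ^ (-α) * Real.Gamma (x+α+1) := by ring

lemma G_le_high {α : ℝ} (hα1 : 1 < α) (hα2 : α ≤ 2) (x : ℝ) (hx : 0 < x) :
    Real.Gamma (x+1) / Real.Gamma (x+α+1) ≤ ((x+α) * (x+α-1) ^ (α-1))⁻¹ := by
  have hs0 : (0:ℝ) ≤ α - 1 := by linarith
  have hxa : (0:ℝ) < x + α := by linarith
  have hxa1 : (0:ℝ) < x + α - 1 := by linarith
  have h2 : 0 < Real.Gamma (x+α+1) := Real.Gamma_pos_of_pos (by linarith)
  have hrp : (0:ℝ) < (x+α-1) ^ (α-1) := Real.rpow_pos_of_pos hxa1 _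
  have key : Real.Gamma (x+1) * ((x+α) * (x+α-1) ^ (α-1)) ≤ Real.Gamma (x+α+1) := by
    have hi := gamma_interp hs0 (by linarith) hx
    rw [show x+1+(α-1) = x+α by ring, show x+(α-1) = x+α-1 by ring] at hi
    calc Real.Gamma (x+1) * ((x+α) * (x+α-1) ^ (α-1))
        = (Real.Gamma (x+1) * (x+α-1) ^ (α-1)) * (x+α) := by ring
      _ ≤ Real.Gamma (x+α) * (x+α) := mul_le_mul_of_nonneg_right hi hxa.le
      _ = Real.Gamma (x+α+1) := by
          rw [show x+α+1 = (x+α)+1 by ring, Real.Gamma_add_one (ne_of_gt hxa)]; ring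
  rw [div_le_iff₀ h2]
  calc Real.Gamma (x+1)
      = Real.Gamma (x+1) * (((x+α) * (x+α-1) ^ (α-1)) * ((x+α) * (x+α-1) ^ (α-1))⁻¹) := by
        rw [mul_inv_cancel₀ (by positivity), mul_one]
    _ = (Real.Gamma (x+1) * ((x+α) * (x+α-1) ^ (α-1))) * ((x+α) * (x+α-1) ^ (α-1))⁻¹ := by
        ring
    _ ≤ Real.Gamma (x+α+1) * ((x+α) * (x+α-1) ^ (α-1))⁻¹ :=
        mul_le_mul_of_nonneg_right key (by positivity)
    _ = ((x+α) * (x+α-1) ^ (α-1))⁻¹ * Real.Gamma (x+α+1) := by ring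

-- ratio nonneg
lemma G_nonneg {α : ℝ} (hα : 0 < α) (j : ℕ) :
    0 ≤ Real.Gamma (α*j+1) / Real.Gamma (α*j+α+1) := by
  have h1 : 0 < Real.Gamma (α*j+1) := Real.Gamma_pos_of_pos (by positivity)
  have h2 : 0 < Real.Gamma (α*j+α+1) := Real.Gamma_pos_of_pos (by positivity)
  positivity

lemma pow_ratio_le {α : ℝ} (hα : 0 < α) (hα' : 2*α < 1) {J : ℝ} (hJ : 1 ≤ J) :
    J ^ (2*α-1) ≤ 2 ^ (1-2*α) * (J+1) ^ (2*α-1) := by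
  have h1 : (2*J) ^ (2*α-1) ≤ (J+1) ^ (2*α-1) :=
    Real.rpow_le_rpow_of_nonpos (by linarith) (by linarith) (by linarith)
  have h2 : (2*J) ^ (2*α-1) = 2 ^ (2*α-1) * J ^ (2*α-1) :=
    Real.mul_rpow (by norm_num) (by linarith)
  have h3 : (2:ℝ) ^ (1-2*α) * 2 ^ (2*α-1) = 1 := by
    rw [← Real.rpow_add (by norm_num)]; norm_num
  calc J ^ (2*α-1) = (2 ^ (1-2*α) * 2 ^ (2*α-1)) * J ^ (2*α-1) := by rw [h3, one_mul]
    _ = 2 ^ (1-2*α) * (2*J) ^ (2*α-1) := by rw [h2]; ring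
    _ ≤ 2 ^ (1-2*α) * (J+1) ^ (2*α-1) := by
        refine mul_le_mul_of_nonneg_left h1 (Real.rpow_nonneg (by norm_num) _)

-- J^{2α-1} ≤ 2^{max(1-2α) 0} (J+1)^{2α-1}, 0<α≤1
lemma pow_ratio_max {α : ℝ} (hα : 0 < α) (hα1 : α ≤ 1) {J : ℝ} (hJ : 1 ≤ J) :
    J ^ (2*α-1) ≤ 2 ^ (max (1-2*α) 0) * (J+1) ^ (2*α-1) := by
  rcases le_or_gt 1 (2*α) with h | h
  · rw [max_eq_right (by linarith)]
    rw [Real.rpow_zero, one_mul]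
    exact Real.rpow_le_rpow (by linarith) (by linarith) (by linarith)
  · rw [max_eq_left (by linarith)]
    exact pow_ratio_le hα h hJ

lemma keyA {α : ℝ} (hα : 0 < α) (hα2 : α ≤ 2) (j : ℕ) (hj : 1 ≤ j) :
    (j:ℝ) ^ (min α 1 - 1) * (Real.Gamma (α*j+1) / Real.Gamma (α*j+α+1)) ≤
      2 ^ (max (1-2*α) 0) * α ^ (-α) * ((j:ℝ)+1) ^ (min α 1 - 1) := by
  have hJ : (1:ℝ) ≤ (j:ℝ) := by exact_mod_cast hj
  have hJ0 : (0:ℝ) < j := by linarith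
  rcases le_or_gt α 1 with h1 | h1
  · -- α ≤ 1
    rw [min_eq_left h1]
    have hG : Real.Gamma (α*j+1) / Real.Gamma (α*j+α+1) ≤ (α*(j:ℝ)+α) ^ (-α) :=
      G_le_low hα h1 (α*j) (by positivity)
    have hGsplit : (α*(j:ℝ)+α) ^ (-α) = α ^ (-α) * ((j:ℝ)+1) ^ (-α) := by
      rw [show α*(j:ℝ)+α = α*((j:ℝ)+1) by ring]
      exact Real.mul_rpow hα.le (by linarith)
    calc (j:ℝ) ^ (α - 1) * (Real.Gamma (α*j+1) / Real.Gamma (α*j+α+1))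
        ≤ (j:ℝ) ^ (α - 1) * (α ^ (-α) * ((j:ℝ)+1) ^ (-α)) := by
          rw [← hGsplit]
          exact mul_le_mul_of_nonneg_left hG (Real.rpow_nonneg hJ0.le _)

      _ ≤ 2 ^ (max (1-2*α) 0) * α ^ (-α) * ((j:ℝ)+1) ^ (α - 1) := by
          have hmain : (j:ℝ) ^ (α-1) * ((j:ℝ)+1) ^ (-α) ≤
              2 ^ (max (1-2*α) 0) * ((j:ℝ)+1) ^ (α-1) := by
            have hstep : (j:ℝ) ^ (α-1) ≤ 2 ^ (max (1-2*α) 0) * ((j:ℝ)+1) ^ (2*α-1) := by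
              calc (j:ℝ) ^ (α-1) ≤ (j:ℝ) ^ (2*α-1) :=
                    Real.rpow_le_rpow_of_exponent_le hJ (by linarith)
                _ ≤ 2 ^ (max (1-2*α) 0) * ((j:ℝ)+1) ^ (2*α-1) := pow_ratio_max hα h1 hJ
            calc (j:ℝ) ^ (α-1) * ((j:ℝ)+1) ^ (-α)
                ≤ (2 ^ (max (1-2*α) 0) * ((j:ℝ)+1) ^ (2*α-1)) * ((j:ℝ)+1) ^ (-α) :=
                  mul_le_mul_of_nonneg_right hstep (Real.rpow_nonneg (by linarith) _)
              _ = 2 ^ (max (1-2*α) 0) * ((j:ℝ)+1) ^ (α-1) := by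
                  rw [mul_assoc, ← Real.rpow_add (by linarith : (0:ℝ) < (j:ℝ)+1),
                    show 2*α-1 + -α = α-1 by ring]
          calc (j:ℝ) ^ (α - 1) * (α ^ (-α) * ((j:ℝ)+1) ^ (-α))
              = α ^ (-α) * ((j:ℝ) ^ (α-1) * ((j:ℝ)+1) ^ (-α)) := by ring
            _ ≤ α ^ (-α) * (2 ^ (max (1-2*α) 0) * ((j:ℝ)+1) ^ (α-1)) :=
                mul_le_mul_of_nonneg_left hmain (Real.rpow_nonneg hα.le _)
            _ = 2 ^ (max (1-2*α) 0) * α ^ (-α) * ((j:ℝ)+1) ^ (α - 1) := by ring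
  · -- 1 < α
    rw [min_eq_right h1.le, sub_self, Real.rpow_zero, Real.rpow_zero, one_mul, mul_one,
      max_eq_right (by linarith : 1-2*α ≤ 0), Real.rpow_zero, one_mul]
    have hG := G_le_high h1 hα2 (α*j) (by positivity)
    refine hG.trans ?_
    have hd2 : α ^ (α-1) ≤ (α*(j:ℝ)+α-1) ^ (α-1) :=
      Real.rpow_le_rpow hα.le (by nlinarith) (by linarith)
    have hpos : (0:ℝ) < α * α ^ (α-1) := by positivity
    have hmem : α * α ^ (α-1) ≤ (α*(j:ℝ)+α) * (α*(j:ℝ)+α-1) ^ (α-1) :=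
      mul_le_mul (by nlinarith) hd2 (Real.rpow_nonneg hα.le _) (by nlinarith)
    have hmulα : α * α ^ (α-1) = α ^ α := by
      nth_rewrite 1 [← Real.rpow_one α]
      rw [← Real.rpow_add hα]; ring_nf
    rw [Real.rpow_neg hα.le, ← hmulα]
    exact inv_anti₀ hpos hmem

lemma two_rpow_eq {α : ℝ} : (2:ℝ)^(2*(α-1)) = 4^(α-1) := by
  rw [show (4:ℝ) = 2^(2:ℕ) by norm_num, ← Real.rpow_natCast 2 2,
    ← Real.rpow_mul (by norm_num)]
  norm_num

lemma f2_lemma {α : ℝ} (h1 : 1 < α) (hα2 : α ≤ 2) (j : ℕ) (hj : 1 ≤ j) :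
    2^(2*(α-1)) * ((j:ℝ)-1) ≤ ((j:ℝ)+1) * (j:ℝ)^(α-1) := by
  have ha0 : (0:ℝ) ≤ α - 1 := by linarith
  have ha1 : α - 1 ≤ 1 := by linarith
  rw [two_rpow_eq]
  rcases Nat.lt_or_ge j 4 with h4 | h4
  · interval_cases j
    · norm_num
    · -- j = 2
      push_cast
      have e1 : (4:ℝ)^(α-1) = 2^(α-1) * 2^(α-1) := by
        rw [← Real.mul_rpow (by norm_num) (by norm_num)]; norm_num
      have e2 : (2:ℝ)^(α-1) ≤ 2 := by
        calc (2:ℝ)^(α-1) ≤ 2^(1:ℝ) := Real.rpow_le_rpow_of_exponent_le one_le_two ha1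
          _ = 2 := Real.rpow_one 2
      have e3 : (0:ℝ) ≤ 2^(α-1) := Real.rpow_nonneg (by norm_num) _
      nlinarith
    · -- j = 3
      push_cast
      have e1 : (4:ℝ)^(α-1) = (4/3)^(α-1) * 3^(α-1) := by
        rw [← Real.mul_rpow (by norm_num) (by norm_num)]; norm_num
      have e2 : ((4:ℝ)/3)^(α-1) ≤ 4/3 := by
        calc ((4:ℝ)/3)^(α-1) ≤ (4/3)^(1:ℝ) :=
              Real.rpow_le_rpow_of_exponent_le (by norm_num) ha1
          _ = 4/3 := Real.rpow_one _
      have e3 : (0:ℝ) ≤ 3^(α-1) := Real.rpow_nonneg (by norm_num) _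
      nlinarith
  · have hJ4 : (4:ℝ) ≤ (j:ℝ) := by exact_mod_cast h4
    have f1 : (4:ℝ)^(α-1) ≤ (j:ℝ)^(α-1) := Real.rpow_le_rpow (by norm_num) hJ4 ha0
    have f2 : (j:ℝ)-1 ≤ (j:ℝ)+1 := by linarith
    calc (4:ℝ)^(α-1) * ((j:ℝ)-1) ≤ (j:ℝ)^(α-1) * ((j:ℝ)+1) :=
          mul_le_mul f1 f2 (by linarith) (Real.rpow_nonneg (by linarith) _)
      _ = ((j:ℝ)+1) * (j:ℝ)^(α-1) := by ring

lemma keyB {α : ℝ} (hα : 0 < α) (hα2 : α ≤ 2) (j : ℕ) (hj : 1 ≤ j) :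
    (∑ i ∈ Finset.Ico 1 j, (i:ℝ) ^ (min α 1 - 1) * ((j:ℝ)-(i:ℝ)) ^ (min α 1 - 1)) *
      (Real.Gamma (α*j+1) / Real.Gamma (α*j+α+1)) ≤
      2 ^ (max (1-2*α) 0) * α ^ (-α) *
        (2 ^ (-(2 * max (α-1) 0)) * Beta (min α 1) (min α 1)) * ((j:ℝ)+1) ^ (min α 1 - 1) := by
  have hJ : (1:ℝ) ≤ (j:ℝ) := by exact_mod_cast hj
  have hJ0 : (0:ℝ) < j := by linarith
  have hGnn := G_nonneg hα j
  rcases le_or_gt α 1 with h1 | h1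
  · -- α ≤ 1 : use conv_le_beta
    rw [min_eq_left h1, max_eq_right (show α - 1 ≤ (0:ℝ) by linarith)]
    simp only [mul_zero, neg_zero, Real.rpow_zero, one_mul]
    have hBnn : 0 < Beta α α := beta_pos hα h1
    have hconv := conv_le_beta hα h1 j hj
    have hG : Real.Gamma (α*j+1) / Real.Gamma (α*j+α+1) ≤ (α*(j:ℝ)+α) ^ (-α) :=
      G_le_low hα h1 (α*j) (by positivity)
    have hGsplit : (α*(j:ℝ)+α) ^ (-α) = α ^ (-α) * ((j:ℝ)+1) ^ (-α) := by
      rw [show α*(j:ℝ)+α = α*((j:ℝ)+1) by ring]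
      exact Real.mul_rpow hα.le (by linarith)
    have hSnn : 0 ≤ ∑ i ∈ Finset.Ico 1 j, (i:ℝ) ^ (α - 1) * ((j:ℝ)-(i:ℝ)) ^ (α - 1) := by
      refine Finset.sum_nonneg fun i hi => ?_
      refine mul_nonneg (Real.rpow_nonneg (Nat.cast_nonneg i) _) (Real.rpow_nonneg ?_ _)
      have h := (Finset.mem_Ico.mp hi).2
      have : (i:ℝ) ≤ (j:ℝ) := by exact_mod_cast h.le
      linarith
    have hpowadd : ((j:ℝ)+1) ^ (2*α-1) * ((j:ℝ)+1) ^ (-α) = ((j:ℝ)+1) ^ (α-1) := by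
      rw [← Real.rpow_add (by linarith), show 2*α-1 + -α = α-1 by ring]
    calc (∑ i ∈ Finset.Ico 1 j, (i:ℝ) ^ (α - 1) * ((j:ℝ)-(i:ℝ)) ^ (α - 1)) *
          (Real.Gamma (α*j+1) / Real.Gamma (α*j+α+1))
        ≤ (Beta α α * (j:ℝ) ^ (2*α-1)) * (α ^ (-α) * ((j:ℝ)+1) ^ (-α)) := by
          refine mul_le_mul hconv ?_ hGnn ?_
          · rw [← hGsplit]; exact hG
          · positivity
      _ ≤ (Beta α α * (2 ^ (max (1-2*α) 0) * ((j:ℝ)+1) ^ (2*α-1))) *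
            (α ^ (-α) * ((j:ℝ)+1) ^ (-α)) := by
          refine mul_le_mul_of_nonneg_right ?_ (by positivity)
          exact mul_le_mul_of_nonneg_left (pow_ratio_max hα h1 hJ) hBnn.le
      _ = 2 ^ (max (1-2*α) 0) * α ^ (-α) * Beta α α * ((j:ℝ)+1) ^ (α - 1) := by
          rw [← hpowadd]; ring
  · -- α > 1
    rw [min_eq_right h1.le, max_eq_right (show 1-2*α ≤ (0:ℝ) by linarith),
      max_eq_left (show (0:ℝ) ≤ α - 1 by linarith)]
    simp only [sub_self, Real.rpow_zero, one_mul, mul_one, beta_one_one]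
    have hsum : (∑ _i ∈ Finset.Ico 1 j, (1:ℝ)) = (j:ℝ) - 1 := by
      rw [Finset.sum_const, Nat.card_Ico, nsmul_eq_mul, mul_one, Nat.cast_sub hj, Nat.cast_one]
    rw [hsum]
    have hG := G_le_high h1 hα2 (α*j) (by positivity)
    have hX : (0:ℝ) < (α*(j:ℝ)+α) * (α*(j:ℝ)+α-1) ^ (α-1) := by
      have h9 : (0:ℝ) < α*(j:ℝ)+α-1 := by nlinarith
      have h8 : (0:ℝ) < α*(j:ℝ)+α := by nlinarith
      positivity
    have hY : (0:ℝ) < α^α * 2^(2*(α-1)) := by positivity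
    have hmulα : α * α ^ (α-1) = α ^ α := by
      nth_rewrite 1 [← Real.rpow_one α]
      rw [← Real.rpow_add hα]; ring_nf
    have step1 : ((j:ℝ)-1) * (Real.Gamma (α*j+1) / Real.Gamma (α*j+α+1)) ≤
        ((j:ℝ)-1) * ((α*(j:ℝ)+α) * (α*(j:ℝ)+α-1) ^ (α-1))⁻¹ :=
      mul_le_mul_of_nonneg_left hG (by linarith)
    have step2 : ((j:ℝ)-1) * ((α*(j:ℝ)+α) * (α*(j:ℝ)+α-1) ^ (α-1))⁻¹ ≤
        (α^α * 2^(2*(α-1)))⁻¹ := by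
      rw [← div_eq_mul_inv, ← one_div, div_le_div_iff₀ hX hY]
      have f1 : α^(α-1) * (j:ℝ)^(α-1) = (α*(j:ℝ))^(α-1) := (Real.mul_rpow hα.le hJ0.le).symm
      have f2 : (α*(j:ℝ))^(α-1) ≤ (α*(j:ℝ)+α-1)^(α-1) :=
        Real.rpow_le_rpow (by positivity) (by linarith) (by linarith)
      have f3 := f2_lemma h1 hα2 j hj
      calc ((j:ℝ)-1) * (α^α * 2^(2*(α-1))) = α^α * (2^(2*(α-1)) * ((j:ℝ)-1)) := by ring
        _ ≤ α^α * (((j:ℝ)+1) * (j:ℝ)^(α-1)) := mul_le_mul_of_nonneg_left f3 (by positivity)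
        _ = (α*(j:ℝ)+α) * (α^(α-1) * (j:ℝ)^(α-1)) := by rw [← hmulα]; ring
        _ ≤ (α*(j:ℝ)+α) * (α*(j:ℝ)+α-1)^(α-1) := by
            refine mul_le_mul_of_nonneg_left ?_ (by nlinarith)
            rw [f1]; exact f2
        _ = 1 * ((α*(j:ℝ)+α) * (α*(j:ℝ)+α-1)^(α-1)) := (one_mul _).symm
    have hfin : α^(-α) * 2^(-(2*(α-1))) = (α^α * 2^(2*(α-1)))⁻¹ := by
      rw [Real.rpow_neg hα.le, Real.rpow_neg (by norm_num : (0:ℝ) ≤ 2), mul_inv]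
    rw [hfin]
    exact step1.trans step2

end Helpers

set_option maxHeartbeats 2000000 in
theorem stmt_0 (α : ℝ) (hα : 0 < α) (hα2 : α ≤ 2)
    (lam mu nu : ℂ) (hlam : lam ≠ 0) (hnu : nu ≠ 0)
    (a : ℕ → ℂ) (ha : IsRiccatiSeq α lam mu nu a)
    (cα τ : ℝ)
    (hc : cα = (2:ℝ) ^ (2 - max (1 - 2*α) 0 - 2 * max (α - 1) 0) * α ^ (α - 1) *
      Beta (min α 1) (min α 1))
    (hτ : τ = (2:ℝ) ^ (1/α - max (1/α - 2) 0) * α /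
      (‖mu‖ + Real.sqrt (‖mu‖^2 + cα * ‖lam‖ * ‖nu‖ / Real.Gamma α)) ^ (1/α)) :
    0 < τ ∧ ENNReal.ofReal τ ≤ radius α a ∧
      ∀ t : ℝ, 0 ≤ t → t < τ → Summable fun k : ℕ => ‖a k‖ * t ^ (α * (k:ℝ)) := by
  obtain ⟨h0, h1a, hrec⟩ := ha
  set β : ℝ := min α 1 with hβdef
  have hβ0 : 0 < β := lt_min hα one_pos
  have hβ1 : β ≤ 1 := min_le_right _ _
  have hβ1' : β - 1 ≤ 0 := by linarith
  have hΓα : 0 < Real.Gamma α := Real.Gamma_pos_of_pos hα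
  have hΓα1 : 0 < Real.Gamma (α+1) := Real.Gamma_pos_of_pos (by linarith)
  have hΓrec : Real.Gamma (α+1) = α * Real.Gamma α := Real.Gamma_add_one hα.ne'
  have hN : 0 < ‖nu‖ := norm_pos_iff.mpr hnu
  have hL : 0 < ‖lam‖ := norm_pos_iff.mpr hlam
  have hM : 0 ≤ ‖mu‖ := norm_nonneg mu
  have hBeta : 0 < Beta β β := beta_pos hβ0 hβ1
  have hcα : 0 < cα := by
    rw [hc]
    have h1 : (0:ℝ) < (2:ℝ) ^ (2 - max (1 - 2*α) 0 - 2 * max (α - 1) 0) :=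
      Real.rpow_pos_of_pos (by norm_num) _
    have h2 : (0:ℝ) < α ^ (α - 1) := Real.rpow_pos_of_pos hα _
    positivity
  set D : ℝ := ‖mu‖ + Real.sqrt (‖mu‖^2 + cα * ‖lam‖ * ‖nu‖ / Real.Gamma α) with hDdef
  have hin : 0 < ‖mu‖^2 + cα * ‖lam‖ * ‖nu‖ / Real.Gamma α := by positivity
  have hsq : 0 < Real.sqrt (‖mu‖^2 + cα * ‖lam‖ * ‖nu‖ / Real.Gamma α) := Real.sqrt_pos.mpr hin
  have hD : 0 < D := by rw [hDdef]; positivity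
  set E : ℝ := 2 ^ (1 - max (1-2*α) 0) * α ^ α with hEdef
  have hE : 0 < E := by
    have := Real.rpow_pos_of_pos (show (0:ℝ) < 2 by norm_num) (1 - max (1-2*α) 0)
    have := Real.rpow_pos_of_pos hα α
    rw [hEdef]; positivity
  set w : ℝ := D / E with hwdef
  have hw : 0 < w := div_pos hD hE
  set B₀ : ℝ := ‖nu‖ / Real.Gamma (α+1) with hB₀def
  have hB₀ : 0 < B₀ := div_pos hN hΓα1
  set X : ℝ := 2 ^ (-(2 * max (α-1) 0)) * Beta β β * (‖lam‖ * B₀) with hXdef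
  have hX : 0 < X := by
    have := Real.rpow_pos_of_pos (show (0:ℝ) < 2 by norm_num) (-(2 * max (α-1) 0))
    rw [hXdef]; positivity
  -- the quadratic identity
  have hD2 : D^2 = 2*‖mu‖*D + cα * ‖lam‖ * ‖nu‖ / Real.Gamma α := by
    have hs2 := Real.sq_sqrt hin.le
    rw [hDdef]; nlinarith [hs2]
  have key2 : (2:ℝ) ^ (max (1-2*α) 0) * α ^ (-α) * E = 2 := by
    have a1 : (2:ℝ) ^ (max (1-2*α) 0) * 2 ^ (1 - max (1-2*α) 0) = 2 := by
      rw [← Real.rpow_add (by norm_num : (0:ℝ) < 2),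
        show max (1-2*α) 0 + (1 - max (1-2*α) 0) = 1 by ring, Real.rpow_one]
    have a2 : α ^ (-α) * α ^ α = 1 := by
      rw [← Real.rpow_add hα, neg_add_cancel, Real.rpow_zero]
    calc (2:ℝ) ^ (max (1-2*α) 0) * α ^ (-α) * E
        = ((2:ℝ) ^ (max (1-2*α) 0) * 2 ^ (1 - max (1-2*α) 0)) * (α ^ (-α) * α ^ α) := by
          rw [hEdef]; ring
      _ = 2 := by rw [a1, a2, mul_one]
  have key3 : (2:ℝ) ^ (max (1-2*α) 0) * α ^ (-α) * E^2 * X =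
      cα * ‖lam‖ * ‖nu‖ / Real.Gamma α := by
    have c1 : ((2:ℝ) ^ (1 - max (1-2*α) 0))^2 = 2 ^ (2 - 2*max (1-2*α) 0) := by
      rw [sq, ← Real.rpow_add (by norm_num : (0:ℝ) < 2)]; congr 1; ring
    have c2 : (α ^ α)^2 = α ^ (2*α) := by
      rw [sq, ← Real.rpow_add hα]; congr 1; ring
    have c4 : (2:ℝ) ^ (max (1-2*α) 0) * 2 ^ (2 - 2*max (1-2*α) 0) * 2 ^ (-(2 * max (α-1) 0)) =
        2 ^ (2 - max (1-2*α) 0 - 2 * max (α-1) 0) := by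
      rw [← Real.rpow_add (by norm_num : (0:ℝ) < 2), ← Real.rpow_add (by norm_num : (0:ℝ) < 2)]
      congr 1; ring
    have c5 : α ^ (-α) * α ^ (2*α) = α ^ (α-1) * α := by
      rw [← Real.rpow_add hα, show -α + 2*α = (α-1) + 1 by ring, Real.rpow_add hα, Real.rpow_one]
    rw [hXdef, hEdef, hB₀def, hΓrec, hc, mul_pow, c1, c2]
    rw [show (2:ℝ) ^ (max (1-2*α) 0) * α ^ (-α) * (2 ^ (2 - 2*max (1-2*α) 0) * α ^ (2*α)) *
        (2 ^ (-(2 * max (α-1) 0)) * Beta β β * (‖lam‖ * (‖nu‖ / (α * Real.Gamma α)))) =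
      ((2:ℝ) ^ (max (1-2*α) 0) * 2 ^ (2 - 2*max (1-2*α) 0) * 2 ^ (-(2 * max (α-1) 0))) *
        ((α ^ (-α) * α ^ (2*α)) * Beta β β * ‖lam‖ * ‖nu‖ / (α * Real.Gamma α)) by ring,
      c4, c5]
    field_simp
  have hquad : w^2 = 2 ^ (max (1-2*α) 0) * α ^ (-α) * (‖mu‖*w + X) := by
    have h2 : w^2 = (2*‖mu‖*D + cα * ‖lam‖ * ‖nu‖ / Real.Gamma α)/E^2 := by
      rw [hwdef, div_pow, hD2]
    rw [h2, ← key3,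
      show (2:ℝ)*‖mu‖*D = (2 ^ (max (1-2*α) 0) * α ^ (-α) * E)*‖mu‖*D by rw [key2], hwdef]
    field_simp
  have hm3 : max (1/α - 2) 0 * α = max (1-2*α) 0 := by
    rcases le_or_gt (1/α) 2 with h | h
    · rw [max_eq_right (by linarith : 1/α - 2 ≤ 0),
        max_eq_right (by
          have : (1:ℝ) ≤ 2*α := (div_le_iff₀ hα).mp h
          linarith : 1 - 2*α ≤ 0), zero_mul]
    · rw [max_eq_left (by linarith : (0:ℝ) ≤ 1/α - 2),
        max_eq_left (by
          have : (2:ℝ)*α < 1 := by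
            have := (lt_div_iff₀ hα).mp h
            linarith
          linarith : (0:ℝ) ≤ 1 - 2*α)]
      field_simp
  have hτα : τ ^ α = E / D := by
    rw [hτ, Real.div_rpow (by positivity) (Real.rpow_nonneg hD.le _),
      Real.mul_rpow (Real.rpow_nonneg (by norm_num) _) hα.le,
      ← Real.rpow_mul (by norm_num : (0:ℝ) ≤ 2),
      ← Real.rpow_mul hD.le,
      show (1/α - max (1/α - 2) 0)*α = 1 - max (1-2*α) 0 by
        rw [← hm3]; field_simp,
      show (1/α)*α = 1 by field_simp, Real.rpow_one, hEdef]
  have hτ0 : 0 < τ := by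
    rw [hτ]
    exact div_pos (by positivity) (Real.rpow_pos_of_pos hD _)
  have hwτ : w * τ^α = 1 := by
    rw [hτα, hwdef]; field_simp
  -- the key recursive estimate
  have hKEY : ∀ j : ℕ, 1 ≤ j →
      (‖lam‖ * B₀ * (∑ i ∈ Finset.Ico 1 j, (i:ℝ) ^ (β-1) * ((j:ℝ)-(i:ℝ)) ^ (β-1)) +
        ‖mu‖ * (w * (j:ℝ) ^ (β-1))) * (Real.Gamma (α*j+1) / Real.Gamma (α*j+α+1)) ≤
      w^2 * ((j:ℝ)+1) ^ (β-1) := by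
    intro j hj
    have hA := keyA hα hα2 j hj
    have hB := keyB hα hα2 j hj
    rw [← hβdef] at hA hB
    have hGnn := G_nonneg hα j
    have t1 : ‖lam‖ * B₀ * ((∑ i ∈ Finset.Ico 1 j, (i:ℝ) ^ (β-1) * ((j:ℝ)-(i:ℝ)) ^ (β-1)) *
        (Real.Gamma (α*j+1) / Real.Gamma (α*j+α+1))) ≤
        ‖lam‖ * B₀ * (2 ^ (max (1-2*α) 0) * α ^ (-α) *
          (2 ^ (-(2 * max (α-1) 0)) * Beta β β) * ((j:ℝ)+1) ^ (β-1)) :=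
      mul_le_mul_of_nonneg_left hB (by positivity)
    have t2 : ‖mu‖ * w * ((j:ℝ) ^ (β-1) * (Real.Gamma (α*j+1) / Real.Gamma (α*j+α+1))) ≤
        ‖mu‖ * w * (2 ^ (max (1-2*α) 0) * α ^ (-α) * ((j:ℝ)+1) ^ (β-1)) :=
      mul_le_mul_of_nonneg_left hA (by positivity)
    calc (‖lam‖ * B₀ * (∑ i ∈ Finset.Ico 1 j, (i:ℝ) ^ (β-1) * ((j:ℝ)-(i:ℝ)) ^ (β-1)) +
          ‖mu‖ * (w * (j:ℝ) ^ (β-1))) * (Real.Gamma (α*j+1) / Real.Gamma (α*j+α+1))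
        = ‖lam‖ * B₀ * ((∑ i ∈ Finset.Ico 1 j, (i:ℝ) ^ (β-1) * ((j:ℝ)-(i:ℝ)) ^ (β-1)) *
            (Real.Gamma (α*j+1) / Real.Gamma (α*j+α+1))) +
          ‖mu‖ * w * ((j:ℝ) ^ (β-1) * (Real.Gamma (α*j+1) / Real.Gamma (α*j+α+1))) := by
          ring
      _ ≤ ‖lam‖ * B₀ * (2 ^ (max (1-2*α) 0) * α ^ (-α) *
            (2 ^ (-(2 * max (α-1) 0)) * Beta β β) * ((j:ℝ)+1) ^ (β-1)) +
          ‖mu‖ * w * (2 ^ (max (1-2*α) 0) * α ^ (-α) * ((j:ℝ)+1) ^ (β-1)) :=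
          add_le_add t1 t2
      _ = (2 ^ (max (1-2*α) 0) * α ^ (-α) * (‖mu‖*w + X)) * ((j:ℝ)+1) ^ (β-1) := by
          rw [hXdef]; ring
      _ = w^2 * ((j:ℝ)+1) ^ (β-1) := by rw [← hquad]
  -- main inductive bound
  have hbound : ∀ k : ℕ, 1 ≤ k → ‖a k‖ ≤ B₀ * w^(k-1) * (k:ℝ) ^ (β-1) := by
    intro k
    induction k using Nat.strong_induction_on with
    | _ k IH =>
      intro hk
      obtain ⟨j, rfl⟩ : ∃ j, k = j + 1 := ⟨k-1, by omega⟩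
      rcases Nat.eq_zero_or_pos j with rfl | hj
      · -- base case k = 1
        rw [h1a]
        rw [norm_div, Complex.norm_real, Real.norm_eq_abs, abs_of_pos hΓα1]
        simp only [Nat.cast_one, pow_zero, Real.one_rpow, mul_one, hB₀def]
        norm_num
      · -- inductive step
        have hGnn := G_nonneg hα j
        have hstep := hrec j hj
        have hJ1 : (1:ℝ) ≤ (j:ℝ) := by exact_mod_cast hj
        -- norm inequality
        have hnorm : ‖a (j+1)‖ ≤
            (‖lam‖ * ‖∑ i ∈ Finset.Ico 1 j, a i * a (j - i)‖ + ‖mu‖ * ‖a j‖) *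
              (Real.Gamma (α*j+1) / Real.Gamma (α*j+α+1)) := by
          rw [hstep, norm_mul, Complex.norm_real, Real.norm_eq_abs, abs_of_nonneg hGnn]
          refine mul_le_mul_of_nonneg_right ?_ hGnn
          refine (norm_add_le _ _).trans ?_
          rw [norm_mul, norm_mul]
        -- bound for the convolution sum
        have hconv : w * ‖∑ i ∈ Finset.Ico 1 j, a i * a (j - i)‖ ≤
            B₀^2 * w^(j-1) *
              (∑ i ∈ Finset.Ico 1 j, (i:ℝ) ^ (β-1) * ((j:ℝ)-(i:ℝ)) ^ (β-1)) := by
          calc w * ‖∑ i ∈ Finset.Ico 1 j, a i * a (j - i)‖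
              ≤ w * ∑ i ∈ Finset.Ico 1 j, ‖a i‖ * ‖a (j - i)‖ := by
                refine mul_le_mul_of_nonneg_left ?_ hw.le
                refine (norm_sum_le _ _).trans ?_
                refine Finset.sum_le_sum fun i _ => ?_
                rw [norm_mul]
            _ = ∑ i ∈ Finset.Ico 1 j, w * (‖a i‖ * ‖a (j - i)‖) := Finset.mul_sum _ _ _
            _ ≤ ∑ i ∈ Finset.Ico 1 j,
                  B₀^2 * w^(j-1) * ((i:ℝ) ^ (β-1) * ((j:ℝ)-(i:ℝ)) ^ (β-1)) := by
                refine Finset.sum_le_sum fun i hi => ?_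
                obtain ⟨hi1, hi2⟩ := Finset.mem_Ico.mp hi
                have hji : 1 ≤ j - i := by omega
                have b1 := IH i (by omega) hi1
                have b2 := IH (j-i) (by omega) hji
                have hcast : ((j-i : ℕ):ℝ) = (j:ℝ) - (i:ℝ) := by
                  rw [Nat.cast_sub hi2.le]
                have hexp : w * (w^(i-1) * w^(j-i-1)) = w^(j-1) := by
                  rw [← pow_add, ← pow_succ', show i-1 + (j-i-1) + 1 = j - 1 by omega]
                calc w * (‖a i‖ * ‖a (j - i)‖)
                    ≤ w * ((B₀ * w^(i-1) * (i:ℝ) ^ (β-1)) *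
                        (B₀ * w^(j-i-1) * ((j-i : ℕ):ℝ) ^ (β-1))) := by
                      refine mul_le_mul_of_nonneg_left ?_ hw.le
                      refine mul_le_mul b1 b2 (norm_nonneg _) ?_
                      positivity
                  _ = B₀^2 * (w * (w^(i-1) * w^(j-i-1))) *
                        ((i:ℝ) ^ (β-1) * (((j-i:ℕ)):ℝ) ^ (β-1)) := by ring
                  _ = B₀^2 * w^(j-1) * ((i:ℝ) ^ (β-1) * ((j:ℝ)-(i:ℝ)) ^ (β-1)) := by
                      rw [hexp, hcast]
            _ = B₀^2 * w^(j-1) *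
                  (∑ i ∈ Finset.Ico 1 j, (i:ℝ) ^ (β-1) * ((j:ℝ)-(i:ℝ)) ^ (β-1)) :=
                (Finset.mul_sum _ _ _).symm
        have hja : w * ‖a j‖ ≤ w * (B₀ * w^(j-1) * (j:ℝ) ^ (β-1)) :=
          mul_le_mul_of_nonneg_left (IH j (by omega) hj) hw.le
        -- multiply hnorm by w and use hKEY
        have hmain : w * ‖a (j+1)‖ ≤ w * (B₀ * w^(j+1-1) * ((j+1:ℕ):ℝ) ^ (β-1)) := by
          have expand : w * ((‖lam‖ * ‖∑ i ∈ Finset.Ico 1 j, a i * a (j - i)‖ +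
              ‖mu‖ * ‖a j‖) * (Real.Gamma (α*j+1) / Real.Gamma (α*j+α+1))) =
              (‖lam‖ * (w * ‖∑ i ∈ Finset.Ico 1 j, a i * a (j - i)‖) +
               ‖mu‖ * (w * ‖a j‖)) * (Real.Gamma (α*j+1) / Real.Gamma (α*j+α+1)) := by
            ring
          calc w * ‖a (j+1)‖
              ≤ w * ((‖lam‖ * ‖∑ i ∈ Finset.Ico 1 j, a i * a (j - i)‖ +
                  ‖mu‖ * ‖a j‖) * (Real.Gamma (α*j+1) / Real.Gamma (α*j+α+1))) :=
                mul_le_mul_of_nonneg_left hnorm hw.le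
            _ = (‖lam‖ * (w * ‖∑ i ∈ Finset.Ico 1 j, a i * a (j - i)‖) +
                  ‖mu‖ * (w * ‖a j‖)) * (Real.Gamma (α*j+1) / Real.Gamma (α*j+α+1)) := expand
            _ ≤ (‖lam‖ * (B₀^2 * w^(j-1) *
                    (∑ i ∈ Finset.Ico 1 j, (i:ℝ) ^ (β-1) * ((j:ℝ)-(i:ℝ)) ^ (β-1))) +
                  ‖mu‖ * (w * (B₀ * w^(j-1) * (j:ℝ) ^ (β-1)))) *
                  (Real.Gamma (α*j+1) / Real.Gamma (α*j+α+1)) := by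
                refine mul_le_mul_of_nonneg_right ?_ hGnn
                refine add_le_add (mul_le_mul_of_nonneg_left hconv hL.le)
                  (mul_le_mul_of_nonneg_left hja hM)
            _ = B₀ * w^(j-1) *
                  ((‖lam‖ * B₀ * (∑ i ∈ Finset.Ico 1 j, (i:ℝ) ^ (β-1) * ((j:ℝ)-(i:ℝ)) ^ (β-1)) +
                    ‖mu‖ * (w * (j:ℝ) ^ (β-1))) *
                   (Real.Gamma (α*j+1) / Real.Gamma (α*j+α+1))) := by ring
            _ ≤ B₀ * w^(j-1) * (w^2 * ((j:ℝ)+1) ^ (β-1)) :=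
                mul_le_mul_of_nonneg_left (hKEY j hj) (by positivity)
            _ = w * (B₀ * w^(j+1-1) * ((j+1:ℕ):ℝ) ^ (β-1)) := by
                have : ((j+1:ℕ):ℝ) = (j:ℝ) + 1 := by push_cast; ring
                rw [this, show j+1-1 = (j-1)+1 by omega, pow_succ]
                ring
        exact le_of_mul_le_mul_left hmain hw
  -- summability
  have hsummable : ∀ t : ℝ, 0 ≤ t → t < τ →
      Summable fun k : ℕ => ‖a k‖ * t ^ (α * (k:ℝ)) := by
    intro t ht htτ
    rcases eq_or_lt_of_le ht with rfl | ht0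
    · refine summable_zero.congr fun k => ?_
      rcases Nat.eq_zero_or_pos k with rfl | hk
      · simp [h0]
      · rw [Real.zero_rpow (by positivity : α * (k:ℝ) ≠ 0), mul_zero]
    · have hτα' : t^α < τ^α := Real.rpow_lt_rpow ht htτ hα
      set r : ℝ := w * t^α with hrdef
      have hr0 : 0 ≤ r := by positivity
      have hr1 : r < 1 := by
        calc r = w * t^α := hrdef
          _ < w * τ^α := mul_lt_mul_of_pos_left hτα' hw
          _ = 1 := hwτ
      refine Summable.of_nonneg_of_le (fun k => by positivity) ?_
        ((summable_geometric_of_lt_one hr0 hr1).mul_left (B₀/w))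
      intro k
      rcases Nat.eq_zero_or_pos k with rfl | hk
      · simp [h0]
        positivity
      · have hb := hbound k hk
        have hkc : (1:ℝ) ≤ (k:ℝ) := by exact_mod_cast hk
        have h1 : (k:ℝ) ^ (β-1) ≤ 1 := Real.rpow_le_one_of_one_le_of_nonpos hkc hβ1'
        have htk : t ^ (α * (k:ℝ)) = (t^α)^k := by
          rw [← Real.rpow_natCast (t^α) k, ← Real.rpow_mul ht]
        calc ‖a k‖ * t ^ (α * (k:ℝ)) ≤ (B₀ * w^(k-1) * (k:ℝ) ^ (β-1)) * (t^α)^k := by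
              rw [htk]
              exact mul_le_mul_of_nonneg_right hb (by positivity)
          _ ≤ (B₀ * w^(k-1)) * (t^α)^k := by
              refine mul_le_mul_of_nonneg_right ?_ (by positivity)
              calc B₀ * w^(k-1) * (k:ℝ) ^ (β-1) ≤ B₀ * w^(k-1) * 1 :=
                    mul_le_mul_of_nonneg_left h1 (by positivity)
                _ = B₀ * w^(k-1) := mul_one _
          _ = (B₀/w) * r^k := by
              have hwk : w^k = w^(k-1) * w := by rw [← pow_succ, show k-1+1 = k by omega]
              rw [hrdef, mul_pow, hwk]
              field_simp
  -- radius bound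
  have hrad : ENNReal.ofReal τ ≤ radius α a := by
    refine le_of_forall_lt fun c hc => ?_
    obtain ⟨y, hcy, hyτ⟩ := exists_between hc
    have hytop : y ≠ ⊤ := hyτ.ne_top
    have hty : (y.toNNReal : ℝ) < τ :=
      (ENNReal.lt_ofReal_iff_toReal_lt hytop).mp hyτ
    have hs := hsummable (y.toNNReal : ℝ) y.toNNReal.coe_nonneg hty
    refine lt_of_lt_of_le hcy ?_
    rw [← ENNReal.coe_toNNReal hytop]
    unfold radius
    exact le_iSup_of_le y.toNNReal (le_iSup_of_le hs le_rfl)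
  exact ⟨hτ0, hrad, hsummable⟩
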